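/- Let ℝ^n and ℝ^m be endowed with norms, let A ∈ ℝ^{m×n}, and let X ⊆ ℝ^n be a convex cone such that A(X) is a linear subspace of ℝ^m containing more than one point. Then 1/‖(A|X)^{-1}‖ = inf { ‖Ay − Ax‖ / ‖Z_{A,X}(y) − x‖ : x,y ∈ X, x ∉ Z_{A,X}(y) }. -/

import Mathlib

noncomputable section
open scoped RealInnerProductSpace
open Set

private lemma coord_le' {n : ℕ} (u : EuclideanSpace ℝ (Fin n)) (i : Fin n) : |u i| ≤ ‖u‖ := by
  rw [EuclideanSpace.norm_eq, ← Real.sqrt_sq_eq_abs]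
  apply Real.sqrt_le_sqrt
  have h : ‖u i‖^2 ≤ ∑ j, ‖u j‖^2 :=
    Finset.single_le_sum (f := fun j => ‖u j‖^2) (fun j _ => sq_nonneg _) (Finset.mem_univ i)
  simpa [Real.norm_eq_abs, sq_abs] using h

private lemma norm_facts' {n : ℕ} (nn : EuclideanSpace ℝ (Fin n) → ℝ)
    (hnn0 : ∀ x, nn x = 0 ↔ x = 0)
    (hnn_add : ∀ x y, nn (x + y) ≤ nn x + nn y)
    (hnn_smul : ∀ (c : ℝ) (x : EuclideanSpace ℝ (Fin n)), nn (c • x) = |c| * nn x) :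
    (∀ x, 0 ≤ nn x) ∧ (∃ C, 0 < C ∧ ∀ x, nn x ≤ C * ‖x‖) ∧ (∃ ε, 0 < ε ∧ ∀ x, ε * ‖x‖ ≤ nn x) := by
  have h0 : nn 0 = 0 := (hnn0 0).mpr rfl
  have hneg : ∀ x, nn (-x) = nn x := fun x => by
    have := hnn_smul (-1) x; simpa using this
  have hpos : ∀ x, 0 ≤ nn x := fun x => by
    have h1 := hnn_add x (-x)
    rw [add_neg_cancel, h0, hneg] at h1
    linarith
  have hCsum : (0:ℝ) ≤ ∑ i, nn (EuclideanSpace.single i (1:ℝ)) :=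
    Finset.sum_nonneg fun i _ => hpos _
  set C : ℝ := (∑ i, nn (EuclideanSpace.single i (1:ℝ))) + 1 with hCdef
  have hC : 0 < C := by rw [hCdef]; linarith
  have hupper : ∀ x, nn x ≤ C * ‖x‖ := by
    intro x
    have hdecomp : x = ∑ i, x i • EuclideanSpace.single i (1:ℝ) := by
      ext j
      rw [WithLp.ofLp_sum, Finset.sum_apply]
      simp [EuclideanSpace.single_apply]
    have h1 : nn x ≤ ∑ i, nn (x i • EuclideanSpace.single i (1:ℝ)) := by
      conv_lhs => rw [hdecomp]
      exact Finset.le_sum_of_subadditive nn h0.le hnn_add _ _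
    have h2 : ∑ i, nn (x i • EuclideanSpace.single i (1:ℝ))
        ≤ ∑ i, ‖x‖ * nn (EuclideanSpace.single i (1:ℝ)) := by
      apply Finset.sum_le_sum
      intro i _
      rw [hnn_smul]
      exact mul_le_mul_of_nonneg_right (coord_le' x i) (hpos _)
    have h3 : ∑ i, ‖x‖ * nn (EuclideanSpace.single i (1:ℝ))
        = (∑ i, nn (EuclideanSpace.single i (1:ℝ))) * ‖x‖ := by
      rw [← Finset.mul_sum, mul_comm]
    have h4 : (∑ i, nn (EuclideanSpace.single i (1:ℝ))) * ‖x‖ ≤ C * ‖x‖ := by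
      apply mul_le_mul_of_nonneg_right _ (norm_nonneg x)
      rw [hCdef]; linarith
    linarith
  refine ⟨hpos, ⟨C, hC, hupper⟩, ?_⟩
  have hsub : ∀ x y, nn x - nn y ≤ nn (x - y) := by
    intro x y
    have := hnn_add (x - y) y
    rw [sub_add_cancel] at this
    linarith
  have hcont : Continuous nn := by
    have hlw : LipschitzWith (Real.toNNReal C) nn := by
      apply LipschitzWith.of_dist_le_mul
      intro x y
      rw [Real.dist_eq, dist_eq_norm, Real.coe_toNNReal _ hC.le]
      rw [abs_le]
      constructor
      · have h2 : nn (y - x) = nn (x - y) := by rw [← neg_sub x y, hneg]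
        have h3 := hupper (x - y)
        have h4 := hsub y x
        linarith
      · linarith [hsub x y, hupper (x - y)]
    exact hlw.continuous
  rcases Nat.eq_zero_or_pos n with hn | hn
  · refine ⟨1, one_pos, fun x => ?_⟩
    have hx : x = 0 := by
      subst hn
      exact Subsingleton.elim x 0
    rw [hx, h0, norm_zero]
    simp
  · have hsph : (Metric.sphere (0:EuclideanSpace ℝ (Fin n)) 1).Nonempty := by
      refine ⟨EuclideanSpace.single ⟨0, hn⟩ (1:ℝ), ?_⟩
      rw [mem_sphere_zero_iff_norm, EuclideanSpace.norm_single]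
      simp
    obtain ⟨x₀, hx₀, hmin⟩ :=
      (isCompact_sphere (0:EuclideanSpace ℝ (Fin n)) 1).exists_isMinOn hsph hcont.continuousOn
    have hx₀norm : ‖x₀‖ = 1 := mem_sphere_zero_iff_norm.mp hx₀
    have hx₀ne : x₀ ≠ 0 := by
      intro h; rw [h, norm_zero] at hx₀norm; norm_num at hx₀norm
    have hεpos : 0 < nn x₀ :=
      lt_of_le_of_ne (hpos x₀) (fun h => hx₀ne ((hnn0 x₀).mp h.symm))
    refine ⟨nn x₀, hεpos, fun x => ?_⟩
    by_cases hx : x = 0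
    · rw [hx, h0, norm_zero]; simp
    · have hxn : 0 < ‖x‖ := norm_pos_iff.mpr hx
      have hu : (‖x‖⁻¹ • x) ∈ Metric.sphere (0:EuclideanSpace ℝ (Fin n)) 1 := by
        rw [mem_sphere_zero_iff_norm, norm_smul, norm_inv, norm_norm,
          inv_mul_cancel₀ hxn.ne']
      have hle : nn x₀ ≤ nn (‖x‖⁻¹ • x) := isMinOn_iff.mp hmin _ hu
      have hx' : nn x = ‖x‖ * nn (‖x‖⁻¹ • x) := by
        have hxx : x = ‖x‖ • (‖x‖⁻¹ • x) := by
          rw [smul_smul, mul_inv_cancel₀ hxn.ne', one_smul]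
        conv_lhs => rw [hxx]
        rw [hnn_smul, abs_of_pos hxn]
      rw [hx']
      calc nn x₀ * ‖x‖ = ‖x‖ * nn x₀ := mul_comm _ _
        _ ≤ ‖x‖ * nn (‖x‖⁻¹ • x) := mul_le_mul_of_nonneg_left hle hxn.le

set_option maxHeartbeats 2000000 in
/-- if X is a convex cone and A(X) is a linear subspace containing more than
one point, then 1/‖(A|X)⁻¹‖ = inf over x,y ∈ X with x ∉ Z_{A,X}(y) of ‖Ay−Ax‖/‖Z_{A,X}(y)−x‖. -/
theorem inverse_norm_characterization_conic {m n : ℕ}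
    (nn : EuclideanSpace ℝ (Fin n) → ℝ)
    (hnn0 : ∀ x, nn x = 0 ↔ x = 0)
    (hnn_add : ∀ x y, nn (x + y) ≤ nn x + nn y)
    (hnn_smul : ∀ (c : ℝ) (x : EuclideanSpace ℝ (Fin n)), nn (c • x) = |c| * nn x)
    (nm : EuclideanSpace ℝ (Fin m) → ℝ)
    (hnm0 : ∀ u, nm u = 0 ↔ u = 0)
    (hnm_add : ∀ u v, nm (u + v) ≤ nm u + nm v)
    (hnm_smul : ∀ (c : ℝ) (u : EuclideanSpace ℝ (Fin m)), nm (c • u) = |c| * nm u)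
    (A : EuclideanSpace ℝ (Fin n) →ₗ[ℝ] EuclideanSpace ℝ (Fin m))
    (X : Set (EuclideanSpace ℝ (Fin n)))
    (hXconv : Convex ℝ X)
    (hXcone : ∀ (c : ℝ), 0 < c → ∀ x ∈ X, c • x ∈ X)
    (hAX : ∃ W : Submodule ℝ (EuclideanSpace ℝ (Fin m)), A '' X = (W : Set (EuclideanSpace ℝ (Fin m))))
    (hAX2 : (A '' X).Nontrivial) :
    1 / sSup {r : ℝ | ∃ v ∈ A '' X, nm v ≤ 1 ∧ r = sInf {s | ∃ x ∈ X, A x = v ∧ s = nn x}}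
      = sInf {r : ℝ | ∃ y ∈ X, ∃ x ∈ X, x ∉ {z | z ∈ X ∧ A z = A y} ∧
          r = nm (A y - A x) / sInf {s | ∃ z ∈ {z | z ∈ X ∧ A z = A y}, s = nn (z - x)}} := by
  obtain ⟨W, hW⟩ := hAX
  obtain ⟨P, hPdef⟩ : ∃ P : Set ℝ, P =
      {r : ℝ | ∃ v ∈ A '' X, nm v ≤ 1 ∧ r = sInf {s | ∃ x ∈ X, A x = v ∧ s = nn x}} := ⟨_, rfl⟩
  obtain ⟨Q, hQdef⟩ : ∃ Q : Set ℝ, Q =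
      {r : ℝ | ∃ y ∈ X, ∃ x ∈ X, x ∉ {z | z ∈ X ∧ A z = A y} ∧
        r = nm (A y - A x) / sInf {s | ∃ z ∈ {z | z ∈ X ∧ A z = A y}, s = nn (z - x)}} := ⟨_, rfl⟩
  rw [← hPdef, ← hQdef]
  obtain ⟨hnn_pos, ⟨Cn, hCn, hCn'⟩, ⟨εn, hεn, hεn'⟩⟩ := norm_facts' nn hnn0 hnn_add hnn_smul
  obtain ⟨hnm_pos, ⟨Cm, hCm, hCm'⟩, -⟩ := norm_facts' nm hnm0 hnm_add hnm_smul
  -- the constant K with nm (A x) ≤ K * nn x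
  obtain ⟨K, hK, hKb⟩ : ∃ K : ℝ, 0 < K ∧ ∀ x, nm (A x) ≤ K * nn x := by
    refine ⟨Cm * ‖LinearMap.toContinuousLinearMap A‖ / εn + 1, ?_, ?_⟩
    · have h1 : (0:ℝ) ≤ Cm * ‖LinearMap.toContinuousLinearMap A‖ / εn := by positivity
      linarith
    intro x
    have h1 : nm (A x) ≤ Cm * ‖A x‖ := hCm' (A x)
    have h2 : ‖A x‖ ≤ ‖LinearMap.toContinuousLinearMap A‖ * ‖x‖ := by
      have := (LinearMap.toContinuousLinearMap A).le_opNorm x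
      simpa using this
    have h3 : εn * ‖x‖ ≤ nn x := hεn' x
    have hop : 0 ≤ ‖LinearMap.toContinuousLinearMap A‖ := norm_nonneg _
    have hxn : 0 ≤ ‖x‖ := norm_nonneg _
    have h4 : Cm * ‖A x‖ ≤ Cm * (‖LinearMap.toContinuousLinearMap A‖ * ‖x‖) :=
      mul_le_mul_of_nonneg_left h2 hCm.le
    have h5 : Cm * (‖LinearMap.toContinuousLinearMap A‖ * ‖x‖)
        ≤ Cm * ‖LinearMap.toContinuousLinearMap A‖ / εn * nn x := by
      rw [div_mul_eq_mul_div, le_div_iff₀ hεn]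
      nlinarith [mul_le_mul_of_nonneg_left h3 (mul_nonneg hCm.le hop)]
    have h6 : Cm * ‖LinearMap.toContinuousLinearMap A‖ / εn * nn x
        ≤ (Cm * ‖LinearMap.toContinuousLinearMap A‖ / εn + 1) * nn x := by
      apply mul_le_mul_of_nonneg_right _ (hnn_pos x)
      linarith
    linarith [h1, h4, h5, h6]
  -- basic facts about X
  obtain ⟨va, hva, vb, hvb, hvab⟩ := hAX2
  obtain ⟨xa, hxaX, hxaA⟩ := id hva
  have hXadd : ∀ x ∈ X, ∀ y ∈ X, x + y ∈ X := by
    intro x hx y hy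
    have hmid : (1/2 : ℝ) • x + (1/2 : ℝ) • y ∈ X :=
      hXconv hx hy (by norm_num) (by norm_num) (by norm_num)
    have h2 := hXcone 2 (by norm_num) _ hmid
    have heq : (2:ℝ) • ((1/2 : ℝ) • x + (1/2 : ℝ) • y) = x + y := by
      rw [smul_add, smul_smul, smul_smul]; norm_num
    rwa [heq] at h2
  -- closure properties of A '' X
  have hWmem : ∀ v, v ∈ A '' X ↔ v ∈ W := fun v => Set.ext_iff.mp hW v
  have hmemAdd : ∀ v ∈ A '' X, ∀ w ∈ A '' X, v + w ∈ A '' X := fun v hv w hw =>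
    (hWmem _).mpr (W.add_mem ((hWmem _).mp hv) ((hWmem _).mp hw))
  have hmemSmul : ∀ (c : ℝ), ∀ v ∈ A '' X, c • v ∈ A '' X := fun c v hv =>
    (hWmem _).mpr (W.smul_mem c ((hWmem _).mp hv))
  have hmemNeg : ∀ v ∈ A '' X, -v ∈ A '' X := fun v hv =>
    (hWmem _).mpr (W.neg_mem ((hWmem _).mp hv))
  have hmemZero : (0 : EuclideanSpace ℝ (Fin m)) ∈ A '' X := (hWmem _).mpr W.zero_mem
  -- fiber value sets
  have fibBdd : ∀ v : EuclideanSpace ℝ (Fin m), BddBelow {s | ∃ x ∈ X, A x = v ∧ s = nn x} :=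
    fun v => ⟨0, by rintro s ⟨x, hx, hAx, rfl⟩; exact hnn_pos x⟩
  have fibNe : ∀ v ∈ A '' X, {s | ∃ x ∈ X, A x = v ∧ s = nn x}.Nonempty := by
    rintro v ⟨x, hx, rfl⟩; exact ⟨nn x, x, hx, rfl, rfl⟩
  obtain ⟨F, hFeq⟩ : ∃ F : EuclideanSpace ℝ (Fin m) → ℝ,
      ∀ v, F v = sInf {s | ∃ x ∈ X, A x = v ∧ s = nn x} := ⟨_, fun v => rfl⟩
  have F_nonneg : ∀ v, 0 ≤ F v := fun v => by
    rw [hFeq]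
    exact Real.sInf_nonneg (by rintro s ⟨x, hx, hAx, rfl⟩; exact hnn_pos x)
  have F_le : ∀ x ∈ X, F (A x) ≤ nn x := fun x hx => by
    rw [hFeq]; exact csInf_le (fibBdd _) ⟨x, hx, rfl, rfl⟩
  have F_lb : ∀ v ∈ A '' X, nm v ≤ K * F v := by
    intro v hv
    have h : nm v / K ≤ F v := by
      rw [hFeq]
      apply le_csInf (fibNe v hv)
      rintro s ⟨x, hx, hAx, rfl⟩
      rw [div_le_iff₀ hK]
      have h2 := hKb x; rw [hAx] at h2; linarith
    rw [div_le_iff₀ hK] at h; linarith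
  have F_subadd : ∀ v ∈ A '' X, ∀ w ∈ A '' X, F (v + w) ≤ F v + F w := by
    intro v hv w hw
    apply le_of_forall_pos_le_add
    intro ε hε
    obtain ⟨s₁, hs₁, hs₁lt⟩ := Real.lt_sInf_add_pos (fibNe v hv) (half_pos hε)
    obtain ⟨s₂, hs₂, hs₂lt⟩ := Real.lt_sInf_add_pos (fibNe w hw) (half_pos hε)
    obtain ⟨x₁, hx₁, hAx₁, rfl⟩ := hs₁
    obtain ⟨x₂, hx₂, hAx₂, rfl⟩ := hs₂
    rw [← hFeq] at hs₁lt hs₂lt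
    have hx12 : x₁ + x₂ ∈ X := hXadd _ hx₁ _ hx₂
    have h1 : F (v + w) ≤ nn (x₁ + x₂) := by
      have h2 := F_le _ hx12; rw [map_add, hAx₁, hAx₂] at h2; exact h2
    have h2 := hnn_add x₁ x₂
    linarith
  have F_smul_le : ∀ v ∈ A '' X, ∀ c : ℝ, 0 < c → F (c • v) ≤ c * F v := by
    intro v hv c hc
    have h : F (c • v) / c ≤ F v := by
      rw [hFeq v]
      apply le_csInf (fibNe v hv)
      rintro s ⟨x, hx, hAx, rfl⟩
      rw [div_le_iff₀ hc]
      have h1 : F (A (c • x)) ≤ nn (c • x) := F_le _ (hXcone c hc x hx)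
      rw [map_smul, hAx, hnn_smul, abs_of_pos hc] at h1
      linarith
    rw [div_le_iff₀ hc] at h; linarith
  have hF0 : F 0 = 0 := by
    apply le_antisymm _ (F_nonneg 0)
    apply le_of_forall_pos_le_add
    intro ε hε
    obtain ⟨x₀, hx₀, hAx₀⟩ := hmemZero
    have hnn0' : 0 ≤ nn x₀ := hnn_pos x₀
    have hden : (0:ℝ) < nn x₀ + 1 := by linarith
    obtain ⟨t, ht, htlt⟩ : ∃ t : ℝ, 0 < t ∧ t * nn x₀ < ε := by
      refine ⟨ε / (nn x₀ + 1), div_pos hε hden, ?_⟩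
      rw [div_mul_eq_mul_div, div_lt_iff₀ hden]
      nlinarith
    have h1 : F (A (t • x₀)) ≤ nn (t • x₀) := F_le _ (hXcone t ht x₀ hx₀)
    rw [map_smul, hAx₀, smul_zero, hnn_smul, abs_of_pos ht] at h1
    linarith
  -- Q is bounded below by 0
  have hQlb : ∀ r ∈ Q, 0 ≤ r := by
    intro r hr
    rw [hQdef] at hr
    obtain ⟨y, hy, x, hx, -, rfl⟩ := hr
    apply div_nonneg (hnm_pos _)
    exact Real.sInf_nonneg (by rintro s ⟨z, hz, rfl⟩; exact hnn_pos _)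
  -- key construction lemma
  have key : ∀ v ∈ A '' X, v ≠ 0 → ∀ η : ℝ, 0 < η → η < F v →
      ∃ r ∈ Q, r ≤ nm v / (F v - η) := by
    rintro v hv hvne η hη hηF
    obtain ⟨y₀, hy₀X, hAy₀⟩ := hv
    have hCc0 : 0 ≤ F (-(A xa)) + nn xa := add_nonneg (F_nonneg _) (hnn_pos xa)
    have hden : (0:ℝ) < F (-(A xa)) + nn xa + 1 := by linarith
    obtain ⟨t, ht, htC⟩ : ∃ t : ℝ, 0 < t ∧ t * (F (-(A xa)) + nn xa) ≤ η := by
      refine ⟨η / (F (-(A xa)) + nn xa + 1), div_pos hη hden, ?_⟩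
      rw [div_mul_eq_mul_div, div_le_iff₀ hden]
      nlinarith
    have hxX : t • xa ∈ X := hXcone t ht xa hxaX
    have hyX : y₀ + t • xa ∈ X := hXadd _ hy₀X _ hxX
    have hAyx : A (y₀ + t • xa) - A (t • xa) = v := by
      rw [map_add, add_sub_cancel_right, hAy₀]
    have hAdiff : A (y₀ + t • xa) = v + t • (A xa) := by
      rw [map_add, map_smul, hAy₀]
    have hnotin : t • xa ∉ {z | z ∈ X ∧ A z = A (y₀ + t • xa)} := by
      rintro ⟨-, h2⟩
      apply hvne
      rw [← hAyx, h2, sub_self]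
    have hDne : {s | ∃ z ∈ {z | z ∈ X ∧ A z = A (y₀ + t • xa)},
        s = nn (z - t • xa)}.Nonempty :=
      ⟨nn (y₀ + t • xa - t • xa), y₀ + t • xa, ⟨hyX, rfl⟩, rfl⟩
    have hmemx : A xa ∈ A '' X := ⟨xa, hxaX, rfl⟩
    have hDlb : F v - t * (F (-(A xa)) + nn xa)
        ≤ sInf {s | ∃ z ∈ {z | z ∈ X ∧ A z = A (y₀ + t • xa)}, s = nn (z - t • xa)} := by
      apply le_csInf hDne
      rintro s ⟨z, ⟨hzX, hAz⟩, rfl⟩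
      have hv' : v = A z + t • (-(A xa)) := by
        rw [hAz, hAdiff, smul_neg]; abel
      have hsub : F v ≤ F (A z) + F (t • (-(A xa))) := by
        conv_lhs => rw [hv']
        exact F_subadd _ ⟨z, hzX, rfl⟩ _ (hmemSmul t _ (hmemNeg _ hmemx))
      have h2 : F (A z) ≤ nn z := F_le z hzX
      have h3 : F (t • (-(A xa))) ≤ t * F (-(A xa)) := F_smul_le _ (hmemNeg _ hmemx) t ht
      have h4 : nn z ≤ nn (z - t • xa) + nn (t • xa) := by
        have h5 := hnn_add (z - t • xa) (t • xa)
        rw [sub_add_cancel] at h5; exact h5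
      have h5 : nn (t • xa) = t * nn xa := by rw [hnn_smul, abs_of_pos ht]
      nlinarith
    have hDpos : 0 < F v - η := by linarith
    have hDge : F v - η
        ≤ sInf {s | ∃ z ∈ {z | z ∈ X ∧ A z = A (y₀ + t • xa)}, s = nn (z - t • xa)} :=
      le_trans (by linarith) hDlb
    refine ⟨nm (A (y₀ + t • xa) - A (t • xa)) /
      sInf {s | ∃ z ∈ {z | z ∈ X ∧ A z = A (y₀ + t • xa)}, s = nn (z - t • xa)}, ?_, ?_⟩
    · rw [hQdef]
      exact ⟨y₀ + t • xa, hyX, t • xa, hxX, hnotin, rfl⟩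
    · rw [hAyx]
      have hnmv0 : 0 ≤ nm v := hnm_pos v
      gcongr
  -- main case split
  by_cases hbdd : BddAbove P
  · -- bounded case
    have hv0 : ∃ v ∈ A '' X, v ≠ 0 := by
      by_cases h : va = 0
      · exact ⟨vb, hvb, fun hb => hvab (by rw [h, hb])⟩
      · exact ⟨va, hva, h⟩
    obtain ⟨v₀, hv₀, hv₀ne⟩ := hv0
    have hnmv₀ : 0 < nm v₀ :=
      lt_of_le_of_ne (hnm_pos v₀) (fun h => hv₀ne ((hnm0 v₀).mp h.symm))
    obtain ⟨v₁, hv₁, hnmv₁⟩ : ∃ v₁ ∈ A '' X, nm v₁ = 1 := by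
      refine ⟨(nm v₀)⁻¹ • v₀, hmemSmul _ _ hv₀, ?_⟩
      rw [hnm_smul, abs_of_pos (inv_pos.mpr hnmv₀), inv_mul_cancel₀ hnmv₀.ne']
    have hv₁ne : v₁ ≠ 0 := by
      intro h
      rw [h, (hnm0 0).mpr rfl] at hnmv₁
      norm_num at hnmv₁
    have hFv₁ : 1/K ≤ F v₁ := by
      have h := F_lb v₁ hv₁
      rw [hnmv₁] at h
      rw [div_le_iff₀ hK]; linarith
    have hFv₁P : F v₁ ∈ P := by
      rw [hPdef]
      exact ⟨v₁, hv₁, le_of_eq hnmv₁, hFeq v₁⟩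
    have hSge : 1/K ≤ sSup P := le_trans hFv₁ (le_csSup hbdd hFv₁P)
    have hSpos : 0 < sSup P := lt_of_lt_of_le (div_pos one_pos hK) hSge
    have hQne : Q.Nonempty := by
      have hFv₁pos : 0 < F v₁ := lt_of_lt_of_le (div_pos one_pos hK) hFv₁
      obtain ⟨r, hrQ, -⟩ := key v₁ hv₁ hv₁ne (F v₁/2) (by linarith) (by linarith)
      exact ⟨r, hrQ⟩
    apply le_antisymm
    · apply le_csInf hQne
      intro r hr
      rw [hQdef] at hr
      obtain ⟨y, hy, x, hx, hnot, rfl⟩ := hr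
      have hvmem : A y - A x ∈ A '' X := by
        have h1 : A y ∈ A '' X := ⟨y, hy, rfl⟩
        have h2 : A x ∈ A '' X := ⟨x, hx, rfl⟩
        have h3 := hmemAdd _ h1 _ (hmemNeg _ h2)
        rwa [← sub_eq_add_neg] at h3
      have hvne : A y - A x ≠ 0 := by
        intro h
        exact hnot ⟨hx, (sub_eq_zero.mp h).symm⟩
      have hnmv : 0 < nm (A y - A x) :=
        lt_of_le_of_ne (hnm_pos _) (fun h => hvne ((hnm0 _).mp h.symm))
      have hDbdd : BddBelow {s | ∃ z ∈ {z | z ∈ X ∧ A z = A y}, s = nn (z - x)} :=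
        ⟨0, by rintro s ⟨z, hz, rfl⟩; exact hnn_pos _⟩
      have hDne' : {s | ∃ z ∈ {z | z ∈ X ∧ A z = A y}, s = nn (z - x)}.Nonempty :=
        ⟨nn (y - x), y, ⟨hy, rfl⟩, rfl⟩
      obtain ⟨D, hDdef⟩ : ∃ D : ℝ,
          D = sInf {s | ∃ z ∈ {z | z ∈ X ∧ A z = A y}, s = nn (z - x)} := ⟨_, rfl⟩
      rw [← hDdef]
      have hD_le : D ≤ F (A y - A x) := by
        rw [hDdef, hFeq]
        apply csInf_le_csInf hDbdd (fibNe _ hvmem)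
        rintro s ⟨w, hw, hAw, rfl⟩
        refine ⟨w + x, ⟨hXadd _ hw _ hx, ?_⟩, ?_⟩
        · rw [map_add, hAw, sub_add_cancel]
        · rw [add_sub_cancel_right]
      have hD_ge : nm (A y - A x) ≤ K * D := by
        have h : nm (A y - A x) / K ≤ D := by
          rw [hDdef]
          apply le_csInf hDne'
          rintro s ⟨z, ⟨hzX, hAz⟩, rfl⟩
          rw [div_le_iff₀ hK]
          have h2 := hKb (z - x)
          rw [map_sub, hAz] at h2
          linarith
        rw [div_le_iff₀ hK] at h; linarith
      have hDpos : 0 < D := by nlinarith [lt_of_lt_of_le hnmv hD_ge, hK]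
      have hFle : F (A y - A x) ≤ sSup P * nm (A y - A x) := by
        have hu : (nm (A y - A x))⁻¹ • (A y - A x) ∈ A '' X := hmemSmul _ _ hvmem
        have hnmu : nm ((nm (A y - A x))⁻¹ • (A y - A x)) = 1 := by
          rw [hnm_smul, abs_of_pos (inv_pos.mpr hnmv), inv_mul_cancel₀ hnmv.ne']
        have huP : F ((nm (A y - A x))⁻¹ • (A y - A x)) ∈ P := by
          rw [hPdef]
          exact ⟨_, hu, le_of_eq hnmu, hFeq _⟩
        have h1 : F ((nm (A y - A x))⁻¹ • (A y - A x)) ≤ sSup P := le_csSup hbdd huP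
        have h2 : F (A y - A x) ≤ nm (A y - A x) * F ((nm (A y - A x))⁻¹ • (A y - A x)) := by
          have h3 := F_smul_le _ hu (nm (A y - A x)) hnmv
          rw [smul_smul, mul_inv_cancel₀ hnmv.ne', one_smul] at h3
          exact h3
        nlinarith
      rw [div_le_div_iff₀ hSpos hDpos]
      nlinarith
    · apply le_of_forall_pos_le_add
      intro ε hε
      have hθ2pos : (0:ℝ) < ε * (sSup P)^2 / 2 := by positivity
      obtain ⟨θ, hθpos, hθle, hθle2⟩ :
          ∃ θ : ℝ, 0 < θ ∧ θ ≤ sSup P / 2 ∧ θ ≤ ε * (sSup P)^2 / 2 :=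
        ⟨min (sSup P / 2) (ε * (sSup P)^2 / 2), lt_min (by linarith) hθ2pos,
          min_le_left _ _, min_le_right _ _⟩
      have hPne : P.Nonempty := ⟨F v₁, hFv₁P⟩
      obtain ⟨p, hpP, hplt⟩ := exists_lt_of_lt_csSup hPne
        (show sSup P - θ/2 < sSup P by linarith)
      rw [hPdef] at hpP
      obtain ⟨v, hv, hnmvle, rfl⟩ := hpP
      rw [← hFeq v] at hplt
      have hFvpos : 0 < F v := by linarith
      have hvne : v ≠ 0 := by
        intro h
        rw [h, hF0] at hFvpos
        exact lt_irrefl _ hFvpos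
      obtain ⟨r, hrQ, hrle⟩ := key v hv hvne (θ/2) (by linarith) (by linarith)
      have hd1 : 0 < sSup P - θ := by linarith
      have hd2 : sSup P - θ ≤ F v - θ/2 := by linarith
      have hd3 : 0 < F v - θ/2 := by linarith
      have hr2 : nm v / (F v - θ/2) ≤ 1 / (sSup P - θ) := by
        calc nm v / (F v - θ/2) ≤ 1 / (F v - θ/2) :=
              (div_le_div_iff_of_pos_right hd3).mpr hnmvle
          _ ≤ 1 / (sSup P - θ) := one_div_le_one_div_of_le hd1 hd2
      have hr3 : 1 / (sSup P - θ) ≤ 1 / sSup P + ε := by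
        rw [div_le_iff₀ hd1]
        have hS1 : 1 / sSup P * sSup P = 1 := one_div_mul_cancel hSpos.ne'
        have h3 : 1 / sSup P * θ ≤ ε * sSup P / 2 := by
          rw [show 1 / sSup P * θ = θ / sSup P by ring, div_le_iff₀ hSpos]
          nlinarith
        nlinarith [mul_le_mul_of_nonneg_left hθle hε.le]
      have h4 : sInf Q ≤ r := csInf_le ⟨0, hQlb⟩ hrQ
      calc sInf Q ≤ r := h4
        _ ≤ nm v / (F v - θ/2) := hrle
        _ ≤ 1 / sSup P + ε := le_trans hr2 hr3
  · -- unbounded case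
    rw [Real.sSup_of_not_bddAbove hbdd, div_zero]
    symm
    apply le_antisymm
    · apply le_of_forall_pos_le_add
      intro ε hε
      obtain ⟨p, hpP, hplt⟩ := not_bddAbove_iff.mp hbdd (2/ε)
      rw [hPdef] at hpP
      obtain ⟨v, hv, hnmvle, rfl⟩ := hpP
      rw [← hFeq v] at hplt
      have hFvpos : 0 < F v := lt_trans (div_pos two_pos hε) hplt
      have hvne : v ≠ 0 := by
        intro h
        rw [h, hF0] at hFvpos
        exact lt_irrefl _ hFvpos
      obtain ⟨r, hrQ, hrle⟩ := key v hv hvne (F v/2) (by linarith) (by linarith)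
      have h2 : nm v / (F v - F v/2) ≤ ε := by
        rw [show F v - F v/2 = F v/2 by ring, div_le_iff₀ (by linarith : (0:ℝ) < F v / 2)]
        have h3 : 2 < F v * ε := (div_lt_iff₀ hε).mp hplt
        nlinarith
      have h4 : sInf Q ≤ r := csInf_le ⟨0, hQlb⟩ hrQ
      linarith
    · exact Real.sInf_nonneg hQlb
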